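/- In the polynomial ring ℚ[t], one has the identity 4·(g(t)² − f(t)³) = 27·(4t⁵ + 15t⁴ + 38t³ + 61t² + 62t + 59), where f(t) = t⁸+6t⁷+21t⁶+50t⁵+86t⁴+114t³+109t²+74t+28 and g(t) = t¹²+9t¹¹+45t¹⁰+156t⁹+408t⁸+846t⁷+1416t⁶+1932t⁵+2136t⁴+1873t³+(2517t²+1167t+299)/2. In particular, g² − f³ is a nonzero constant multiple of a quintic, so the discriminant of the elliptic fibration y² = x³ − 27f(t)x + 54g(t) vanishes at exactly five finite values of t. -/

import Mathlib

open scoped Classical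

open Polynomial

/-- The `[19,1,1,1,1,1]` fibration: `4 (g² − f³) = 27 ·(4t⁵+15t⁴+38t³+61t²+62t+59)` in `ℚ[t]`;
in particular `g² − f³` is a nonzero constant multiple of a quintic, so the discriminant of
`y² = x³ − 27 f x + 54 g` vanishes at exactly five finite values of `t` (in an algebraic
closure of `ℚ`). -/
theorem stmt_0 :
    let f : Polynomial ℚ := X ^ 8 + 6 * X ^ 7 + 21 * X ^ 6 + 50 * X ^ 5 + 86 * X ^ 4 +
      114 * X ^ 3 + 109 * X ^ 2 + 74 * X + 28
    let g : Polynomial ℚ := X ^ 12 + 9 * X ^ 11 + 45 * X ^ 10 + 156 * X ^ 9 + 408 * X ^ 8 +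
      846 * X ^ 7 + 1416 * X ^ 6 + 1932 * X ^ 5 + 2136 * X ^ 4 + 1873 * X ^ 3 +
      C (2517 / 2 : ℚ) * X ^ 2 + C (1167 / 2 : ℚ) * X + C (299 / 2 : ℚ)
    let q : Polynomial ℚ := 4 * X ^ 5 + 15 * X ^ 4 + 38 * X ^ 3 + 61 * X ^ 2 + 62 * X + 59
    4 * (g ^ 2 - f ^ 3) = 27 * q ∧
      (∃ c : ℚ, c ≠ 0 ∧ g ^ 2 - f ^ 3 = C c * q) ∧
      ((g ^ 2 - f ^ 3).aroots (AlgebraicClosure ℚ)).toFinset.card = 5 := by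
  intro f g q
  have hc : (2 : Polynomial ℚ) * C (2⁻¹ : ℚ) = 1 := by simp only [← map_ofNat (C : ℚ →+* Polynomial ℚ), ← C_mul, ← C_1]; exact congrArg C (by norm_num)
  -- g = C(1/2) * G with G integral
  have hg : g = C (2⁻¹ : ℚ) * (2 * X ^ 12 + 18 * X ^ 11 + 90 * X ^ 10 + 312 * X ^ 9 +
      816 * X ^ 8 + 1692 * X ^ 7 + 2832 * X ^ 6 + 3864 * X ^ 5 + 4272 * X ^ 4 +
      3746 * X ^ 3 + 2517 * X ^ 2 + 1167 * X + 299) := by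
    have h1 : (C (2517 / 2 : ℚ) : Polynomial ℚ) = C (2⁻¹ : ℚ) * 2517 := by simp only [← map_ofNat (C : ℚ →+* Polynomial ℚ), ← C_mul, ← C_1]; exact congrArg C (by norm_num)
    have h2 : (C (1167 / 2 : ℚ) : Polynomial ℚ) = C (2⁻¹ : ℚ) * 1167 := by simp only [← map_ofNat (C : ℚ →+* Polynomial ℚ), ← C_mul, ← C_1]; exact congrArg C (by norm_num)
    have h3 : (C (299 / 2 : ℚ) : Polynomial ℚ) = C (2⁻¹ : ℚ) * 299 := by simp only [← map_ofNat (C : ℚ →+* Polynomial ℚ), ← C_mul, ← C_1]; exact congrArg C (by norm_num)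
    simp only [f, g, h1, h2, h3]
    linear_combination (-(X ^ 12 + 9 * X ^ 11 + 45 * X ^ 10 + 156 * X ^ 9 + 408 * X ^ 8 +
      846 * X ^ 7 + 1416 * X ^ 6 + 1932 * X ^ 5 + 2136 * X ^ 4 + 1873 * X ^ 3 : Polynomial ℚ)) * hc
  have h4 : (4 : Polynomial ℚ) * (C (2⁻¹ : ℚ) * C (2⁻¹ : ℚ)) = 1 := by simp only [← map_ofNat (C : ℚ →+* Polynomial ℚ), ← C_mul, ← C_1]; exact congrArg C (by norm_num)
  have key : 4 * (g ^ 2 - f ^ 3) = 27 * q := by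
    rw [hg]
    simp only [f, q]
    linear_combination ((2 * X ^ 12 + 18 * X ^ 11 + 90 * X ^ 10 + 312 * X ^ 9 +
      816 * X ^ 8 + 1692 * X ^ 7 + 2832 * X ^ 6 + 3864 * X ^ 5 + 4272 * X ^ 4 +
      3746 * X ^ 3 + 2517 * X ^ 2 + 1167 * X + 299 : Polynomial ℚ)) ^ 2 * h4
  have hC274 : (C (27 / 4 : ℚ) : Polynomial ℚ) * 4 = 27 := by simp only [← map_ofNat (C : ℚ →+* Polynomial ℚ), ← C_mul, ← C_1]; exact congrArg C (by norm_num)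
  have hfactor : g ^ 2 - f ^ 3 = C (27 / 4 : ℚ) * q := by
    have h4' : (4 : ℚ) ≠ 0 := by norm_num
    have : (4 : Polynomial ℚ) * (g ^ 2 - f ^ 3) = (4 : Polynomial ℚ) * (C (27 / 4 : ℚ) * q) := by
      rw [key]; linear_combination (-q) * hC274
    exact mul_left_cancel₀ (by norm_num : (4 : Polynomial ℚ) ≠ 0) this
  refine ⟨key, ⟨27 / 4, by norm_num, hfactor⟩, ?_⟩
  -- separability of q
  have hd : q.derivative = 20 * X ^ 4 + 60 * X ^ 3 + 114 * X ^ 2 + 122 * X + 62 := by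
    simp only [q]
    simp only [derivative_add, derivative_mul, derivative_X_pow, derivative_X, derivative_ofNat,
      derivative_one, C_eq_natCast]
    push_cast
    ring
  have hN : (54872 : Polynomial ℚ) * C ((54872 : ℚ)⁻¹) = 1 := by simp only [← map_ofNat (C : ℚ →+* Polynomial ℚ), ← C_mul, ← C_1]; exact congrArg C (by norm_num)
  have hsep : q.Separable := by
    refine ⟨C ((54872 : ℚ)⁻¹) * (-320 * X ^ 3 - 1420 * X ^ 2 - 2464 * X + 206),
      C ((54872 : ℚ)⁻¹) * (64 * X ^ 4 + 332 * X ^ 3 + 805 * X ^ 2 + 783 * X + 689), ?_⟩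
    rw [hd]
    simp only [q]
    linear_combination hN
  have hq5 : q.natDegree = 5 := by
    simp only [q]
    compute_degree!
  have hq0 : q ≠ 0 := fun h => by simp [h] at hq5
  rw [hfactor, aroots_C_mul _ (by norm_num : (27 / 4 : ℚ) ≠ 0)]
  have hnodup : (q.aroots (AlgebraicClosure ℚ)).Nodup := nodup_roots hsep.map
  rw [Multiset.toFinset_card_of_nodup hnodup]
  have hsplit : Splits (q.map (algebraMap ℚ (AlgebraicClosure ℚ))) := IsAlgClosed.splits _
  rw [IsAlgClosed.card_aroots_eq_natDegree, hq5]
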